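/- In a concurrent stepped-wedge design with m interventions, if the effect vector of intervention k is constant, δₖ = δₖ·1_{T−1}, then E(θ̂ₖ) = δₖ + (1/g)·((d/c)·r' − v')·Σ_{k*≠k} δ_{k*}. In particular the identity (1/c)·r'1 + (1/g)·((d/c)·r' − v')·1 = 1 holds, i.e. the weights applied to δₖ's own components sum to one. -/
import Mathlib

private lemma poly_sum (n : ℕ) (p q u : ℝ) :
    ∑ j : Fin n, (p + q * ((j : ℝ) + 1) + u * ((j : ℝ) + 1) ^ 2)
      = p * n + q * (n * (n + 1) / 2) + u * (n * (n + 1) * (2 * n + 1) / 6) := by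
  rw [Fin.sum_univ_eq_sum_range (fun j => p + q * ((j : ℝ) + 1) + u * ((j : ℝ) + 1) ^ 2)]
  induction n with
  | zero => simp
  | succ n ih =>
      rw [Finset.sum_range_succ, ih]
      push_cast
      ring

set_option maxHeartbeats 1600000 in
/-- Corollary 1 (first part): in a concurrent stepped-wedge design with `m`
interventions, if intervention `k` has a constant effect `δₖ·1`, then
`E(θ̂ₖ) = δₖ + (1/g)·((d/c)·r′ − v′)·Σ_{k*≠k} δ_{k*}`; in particular the own-block
weights satisfy `(1/c)·r′1 + (1/g)·((d/c)·r′ − v′)·1 = 1`. -/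
theorem concurrent_constant_own_effect
    (T mI : ℕ) (hT : 3 ≤ T) (hm : 1 ≤ mI)
    (b c d g : ℝ)
    (hc : c = (T : ℝ) * ((T : ℝ) - 1) * (3 + b - 2 * b * (T : ℝ)) / 6)
    (hd : d = (T : ℝ) * (4 * (T : ℝ) - 2 - 3 * b * (T : ℝ) * ((T : ℝ) - 1)) / (12 * (mI : ℝ)))
    (hg : g = (T : ℝ) * ((T : ℝ) - 2) * (2 + b - b * (T : ℝ)) / 12)
    (hc0 : c ≠ 0) (hg0 : g ≠ 0)
    (r v : Fin (T - 1) → ℝ)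
    (hr : ∀ j : Fin (T - 1),
      r j = ((T : ℝ) - ((j : ℕ) + 1 : ℕ)) * (1 + b * (1 - (T : ℝ) - ((j : ℕ) + 1 : ℕ)) / 2))
    (hv : ∀ j : Fin (T - 1),
      v j = ((T : ℝ) - ((j : ℕ) + 1 : ℕ))
        * (1 - b * (T : ℝ) + ((j : ℕ) + 1 : ℕ) / ((T : ℝ) - 1)) / (2 * (mI : ℝ)))
    (δ : Fin mI → Fin (T - 1) → ℝ) (k : Fin mI) (δk : ℝ)
    (hconst : ∀ e, δ k e = δk)
    -- Equation (8) from Proposition 1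
    (Eθ : Fin mI → ℝ)
    (hEθ : ∀ k' : Fin mI,
      Eθ k' = (1 / c) * (∑ e, r e * δ k' e)
        + (1 / g) * (∑ e, ((d / c) * r e - v e) * (∑ k'', δ k'' e))) :
    Eθ k = δk + (1 / g) * (∑ e, ((d / c) * r e - v e) * (∑ k'' ∈ Finset.univ.erase k, δ k'' e))
    ∧ (1 / c) * (∑ e, r e) + (1 / g) * (∑ e, ((d / c) * r e - v e)) = 1 := by
  have hm0 : (mI : ℝ) ≠ 0 := Nat.cast_ne_zero.mpr (by omega)
  have hT1 : ((T : ℝ) - 1) ≠ 0 := by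
    have : (3 : ℝ) ≤ (T : ℝ) := by exact_mod_cast hT
    intro h; nlinarith
  have hN : ((T - 1 : ℕ) : ℝ) = (T : ℝ) - 1 := by
    have : 1 ≤ T := by omega
    push_cast [Nat.cast_sub this]
    ring
  set N : ℝ := ((T - 1 : ℕ) : ℝ) with hNdef
  -- closed form for ∑ r
  have hSr : ∑ e, r e
      = ((T : ℝ) + b * (T : ℝ) * (1 - (T : ℝ)) / 2) * N
        + (-(T : ℝ) * b / 2 - 1 - b * (1 - (T : ℝ)) / 2) * (N * (N + 1) / 2)
        + (b / 2) * (N * (N + 1) * (2 * N + 1) / 6) := by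
    rw [← poly_sum (T - 1)]
    refine Finset.sum_congr rfl fun j _ => ?_
    rw [hr j]
    push_cast
    ring
  -- closed form for ∑ v
  have hSv : ∑ e, v e
      = ((T : ℝ) * (1 - b * (T : ℝ)) / (2 * (mI : ℝ))) * N
        + (((T : ℝ) / ((T : ℝ) - 1) - (1 - b * (T : ℝ))) / (2 * (mI : ℝ))) * (N * (N + 1) / 2)
        + (-(1 / (((T : ℝ) - 1) * (2 * (mI : ℝ))))) * (N * (N + 1) * (2 * N + 1) / 6) := by
    rw [← poly_sum (T - 1)]
    refine Finset.sum_congr rfl fun j _ => ?_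
    rw [hv j]
    push_cast
    field_simp
    ring
  have hsplit : (∑ e, ((d / c) * r e - v e)) = (d / c) * (∑ e, r e) - ∑ e, v e := by
    rw [Finset.sum_sub_distrib, Finset.mul_sum]
  -- the key scalar identity
  have hkey : g * (∑ e, r e) + d * (∑ e, r e) - c * (∑ e, v e) = c * g := by
    rw [hSr, hSv, hN, hc, hd, hg]
    field_simp
    ring
  have hone : (1 / c) * (∑ e, r e) + (1 / g) * (∑ e, ((d / c) * r e - v e)) = 1 := by
    rw [hsplit]
    have h2 : (1 / c) * (∑ e, r e) + (1 / g) * ((d / c) * (∑ e, r e) - ∑ e, v e)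
        = (g * (∑ e, r e) + d * (∑ e, r e) - c * (∑ e, v e)) / (c * g) := by
      field_simp
      ring
    rw [h2, hkey, div_self (mul_ne_zero hc0 hg0)]
  refine ⟨?_, hone⟩
  have hsum : ∀ e, (∑ k'', δ k'' e) = δk + ∑ k'' ∈ Finset.univ.erase k, δ k'' e := by
    intro e
    rw [← Finset.add_sum_erase _ _ (Finset.mem_univ k), hconst]
  have e1 : (∑ e, r e * δ k e) = δk * ∑ e, r e := by
    rw [Finset.mul_sum]
    exact Finset.sum_congr rfl fun e _ => by rw [hconst]; ring
  have e2 : (∑ e, ((d / c) * r e - v e) * (∑ k'', δ k'' e))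
      = δk * (∑ e, ((d / c) * r e - v e))
        + ∑ e, ((d / c) * r e - v e) * (∑ k'' ∈ Finset.univ.erase k, δ k'' e) := by
    rw [Finset.mul_sum, ← Finset.sum_add_distrib]
    exact Finset.sum_congr rfl fun e _ => by rw [hsum e]; ring
  rw [hEθ k, e1, e2]
  linear_combination δk * hone
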